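/- (One-step linear descent of the merit function) Let 𝓛 : ℝ^{d×r} → ℝ be differentiable with L'-Lipschitz Euclidean gradient, let Λ : ℝ^{d×r} → ℝ^{d×r} be any map, and let ρ > 0, μ' > 0, and 0 < α ≤ ρ/L'. Suppose that at a point x ∈ ℝ^{d×r}: (i) ⟨∇𝓛(x), Λ(x)⟩ ≥ ρ‖Λ(x)‖²_F, and (ii) 𝓛(x) ≤ (1/μ')‖Λ(x)‖²_F. Then the update x⁺ = x − αΛ(x) satisfies 𝓛(x⁺) ≤ (1 − αρμ'/2)·𝓛(x). -/

import Mathlib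

open Matrix

attribute [local instance] Matrix.frobeniusNormedAddCommGroup Matrix.frobeniusNormedSpace

/-- Frobenius inner product `⟨A, B⟩ = Tr(A Bᵀ)`. -/
noncomputable def finner {m n : Type*} [Fintype m] [Fintype n]
    (A B : Matrix m n ℝ) : ℝ := (A * Bᵀ).trace

lemma finner_sum {m n : Type*} [Fintype m] [Fintype n] (A B : Matrix m n ℝ) :
    finner A B = ∑ p : m × n, A p.1 p.2 * B p.1 p.2 := by
  rw [Fintype.sum_prod_type]
  simp [finner, Matrix.trace, Matrix.mul_apply, Matrix.diag]

lemma fro_norm_sq {m n : Type*} [Fintype m] [Fintype n] (A : Matrix m n ℝ) :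
    ‖A‖ ^ 2 = ∑ p : m × n, A p.1 p.2 ^ 2 := by
  rw [Matrix.frobenius_norm_def, ← Real.rpow_natCast _ 2,
    ← Real.rpow_mul (by positivity)]
  norm_num
  rw [Fintype.sum_prod_type]

lemma finner_le {m n : Type*} [Fintype m] [Fintype n] (A B : Matrix m n ℝ) :
    finner A B ≤ ‖A‖ * ‖B‖ := by
  have h : (finner A B) ^ 2 ≤ (‖A‖ * ‖B‖) ^ 2 := by
    rw [finner_sum, mul_pow, fro_norm_sq, fro_norm_sq]
    exact Finset.sum_mul_sq_le_sq_mul_sq _ _ _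
  calc finner A B ≤ |finner A B| := le_abs_self _
    _ = Real.sqrt ((finner A B) ^ 2) := (Real.sqrt_sq_eq_abs _).symm
    _ ≤ Real.sqrt ((‖A‖ * ‖B‖) ^ 2) := Real.sqrt_le_sqrt h
    _ = ‖A‖ * ‖B‖ := Real.sqrt_sq (by positivity)

lemma finner_sub_left {m n : Type*} [Fintype m] [Fintype n] (A B C : Matrix m n ℝ) :
    finner (A - B) C = finner A C - finner B C := by
  simp [finner, Matrix.sub_mul]

lemma finner_smul_right {m n : Type*} [Fintype m] [Fintype n] (c : ℝ) (A B : Matrix m n ℝ) :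
    finner A (c • B) = c * finner A B := by
  simp only [finner_sum, Finset.mul_sum, Matrix.smul_apply, smul_eq_mul]
  exact Finset.sum_congr rfl fun i _ => by ring

/-- Descent lemma. -/
lemma descent_lemma {d r : ℕ} {L' : ℝ}
    (𝓛 : Matrix (Fin d) (Fin r) ℝ → ℝ)
    (h𝓛diff : Differentiable ℝ 𝓛)
    (gradL : Matrix (Fin d) (Fin r) ℝ → Matrix (Fin d) (Fin r) ℝ)
    (hgradL : ∀ y v : Matrix (Fin d) (Fin r) ℝ, fderiv ℝ 𝓛 y v = finner (gradL y) v)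
    (hLip : ∀ y z : Matrix (Fin d) (Fin r) ℝ, ‖gradL y - gradL z‖ ≤ L' * ‖y - z‖)
    (x v : Matrix (Fin d) (Fin r) ℝ) :
    𝓛 (x + v) ≤ 𝓛 x + finner (gradL x) v + L' / 2 * ‖v‖ ^ 2 := by
  set φ : ℝ → ℝ := fun t =>
    𝓛 (x + t • v) - t * finner (gradL x) v - L' / 2 * t ^ 2 * ‖v‖ ^ 2 with hφ
  have hderiv : ∀ t : ℝ, HasDerivAt φ
      (finner (gradL (x + t • v)) v - finner (gradL x) v - L' * t * ‖v‖ ^ 2) t := by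
    intro t
    have h1 : HasDerivAt (fun t : ℝ => x + t • v) v t := by
      exact (((hasDerivAt_id t).smul_const v).const_add x).congr_deriv (one_smul ℝ v)
    have h2 : HasDerivAt (fun t : ℝ => 𝓛 (x + t • v)) (fderiv ℝ 𝓛 (x + t • v) v) t :=
      (h𝓛diff _).hasFDerivAt.comp_hasDerivAt t h1
    rw [hgradL] at h2
    have h3 : HasDerivAt (fun t : ℝ => t * finner (gradL x) v) (finner (gradL x) v) t := by
      simpa using (hasDerivAt_id t).mul_const (finner (gradL x) v)
    have h4 : HasDerivAt (fun t : ℝ => L' / 2 * t ^ 2 * ‖v‖ ^ 2)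
        (L' * t * ‖v‖ ^ 2) t := by
      have := ((hasDerivAt_pow 2 t).const_mul (L' / 2)).mul_const (‖v‖ ^ 2)
      refine this.congr_deriv ?_
      ring
    exact (h2.sub h3).sub h4
  have hmono : AntitoneOn φ (Set.Icc (0 : ℝ) 1) := by
    apply antitoneOn_of_deriv_nonpos (convex_Icc 0 1)
    · exact fun t _ => ((hderiv t).continuousAt).continuousWithinAt
    · exact fun t _ => ((hderiv t).differentiableAt).differentiableWithinAt
    · intro t ht
      rw [interior_Icc] at ht
      rw [(hderiv t).deriv]
      have key : finner (gradL (x + t • v)) v - finner (gradL x) v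
          ≤ L' * t * ‖v‖ ^ 2 := by
        have e1 : finner (gradL (x + t • v)) v - finner (gradL x) v
            = finner (gradL (x + t • v) - gradL x) v := (finner_sub_left _ _ _).symm
        rw [e1]
        calc finner (gradL (x + t • v) - gradL x) v
            ≤ ‖gradL (x + t • v) - gradL x‖ * ‖v‖ := finner_le _ _
          _ ≤ (L' * ‖x + t • v - x‖) * ‖v‖ := by
              apply mul_le_mul_of_nonneg_right (hLip _ _) (norm_nonneg _)
          _ = L' * t * ‖v‖ ^ 2 := by
              have : ‖x + t • v - x‖ = t * ‖v‖ := by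
                rw [add_sub_cancel_left, norm_smul, Real.norm_eq_abs,
                  abs_of_nonneg ht.1.le]
              rw [this]; ring
      linarith
  have h01 := hmono (Set.left_mem_Icc.2 zero_le_one) (Set.right_mem_Icc.2 zero_le_one)
    zero_le_one
  simp only [hφ, zero_smul, add_zero, one_smul, zero_mul, sub_zero, zero_pow,
    mul_zero, one_mul, one_pow, mul_one] at h01
  linarith

/-- (One-step linear descent of the merit function) If `𝓛` is differentiable with
`L'`-Lipschitz Euclidean gradient, `0 < α ≤ ρ/L'`, and at the point `x` one has
`⟨∇𝓛(x), Λ(x)⟩ ≥ ρ‖Λ(x)‖²` and `𝓛(x) ≤ (1/μ')‖Λ(x)‖²`, then the update `x⁺ = x - αΛ(x)`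
satisfies `𝓛(x⁺) ≤ (1 - αρμ'/2) 𝓛(x)`. -/
theorem one_step_linear_descent (d r : ℕ) (L' ρ μ' α : ℝ)
    (hρ : 0 < ρ) (hμ' : 0 < μ') (hα : 0 < α) (hαle : α ≤ ρ / L')
    (𝓛 : Matrix (Fin d) (Fin r) ℝ → ℝ)
    (h𝓛diff : Differentiable ℝ 𝓛)
    (gradL : Matrix (Fin d) (Fin r) ℝ → Matrix (Fin d) (Fin r) ℝ)
    (hgradL : ∀ y v : Matrix (Fin d) (Fin r) ℝ, fderiv ℝ 𝓛 y v = finner (gradL y) v)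
    (hLip : ∀ y z : Matrix (Fin d) (Fin r) ℝ, ‖gradL y - gradL z‖ ≤ L' * ‖y - z‖)
    (Λ : Matrix (Fin d) (Fin r) ℝ → Matrix (Fin d) (Fin r) ℝ)
    (x : Matrix (Fin d) (Fin r) ℝ)
    (h1 : finner (gradL x) (Λ x) ≥ ρ * ‖Λ x‖ ^ 2)
    (h2 : 𝓛 x ≤ (1 / μ') * ‖Λ x‖ ^ 2) :
    𝓛 (x - α • Λ x) ≤ (1 - α * ρ * μ' / 2) * 𝓛 x := by
  have hL' : 0 < L' := by
    by_contra h
    push_neg at h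
    rcases eq_or_lt_of_le h with h0 | hneg
    · rw [h0, div_zero] at hαle; linarith
    · have : ρ / L' < 0 := div_neg_of_pos_of_neg hρ hneg
      linarith
  have hαL : α * L' ≤ ρ := by
    rw [le_div_iff₀ hL'] at hαle; linarith [hαle]
  set v := -(α • Λ x) with hv
  have hnv : ‖v‖ ^ 2 = α ^ 2 * ‖Λ x‖ ^ 2 := by
    rw [hv, norm_neg, norm_smul, Real.norm_eq_abs, abs_of_pos hα, mul_pow]
  have hfin : finner (gradL x) v = -(α * finner (gradL x) (Λ x)) := by
    rw [hv, ← neg_one_smul ℝ (α • Λ x), smul_smul, finner_smul_right]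
    ring
  have hdes := descent_lemma 𝓛 h𝓛diff gradL hgradL hLip x v
  have hxv : x + v = x - α • Λ x := by rw [hv]; abel
  rw [hxv] at hdes
  -- 𝓛 (x - α•Λx) ≤ 𝓛 x - α ⟨g,Λ⟩ + L'/2 α² ‖Λ‖²
  have key : 𝓛 (x - α • Λ x) ≤ 𝓛 x - (α * ρ / 2) * ‖Λ x‖ ^ 2 := by
    have e1 : -(α * finner (gradL x) (Λ x)) ≤ -(α * ρ * ‖Λ x‖ ^ 2) := by
      have := mul_le_mul_of_nonneg_left h1 hα.le
      nlinarith
    have e2 : L' / 2 * (α ^ 2 * ‖Λ x‖ ^ 2) ≤ α * ρ / 2 * ‖Λ x‖ ^ 2 := by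
      have hΛ : (0:ℝ) ≤ ‖Λ x‖ ^ 2 := by positivity
      nlinarith
    rw [hfin, hnv] at hdes
    nlinarith
  have hΛμ : μ' * 𝓛 x ≤ ‖Λ x‖ ^ 2 := by
    calc μ' * 𝓛 x ≤ μ' * (1 / μ' * ‖Λ x‖ ^ 2) := mul_le_mul_of_nonneg_left h2 hμ'.le
      _ = ‖Λ x‖ ^ 2 := by field_simp
  have : (α * ρ / 2) * (μ' * 𝓛 x) ≤ (α * ρ / 2) * ‖Λ x‖ ^ 2 :=
    mul_le_mul_of_nonneg_left hΛμ (by positivity)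
  nlinarith [key]
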